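/- Let A be an m_a × r matrix and C an m_c × r matrix over a field, and let B be an m_a × s matrix. Form the block matrix M = [[A, B], [C, 0]]. If rank A < rank C = r, then rank M > rank [A B]. -/

import Mathlib

/-- Block matrix rank rule: if `rank A < rank C = r`, then the rank of the block
matrix `[[A, B], [C, 0]]` is strictly bigger than the rank of `[A B]`. -/
theorem rank_fromBlocks_gt_of_rank_lt_rank_eq
    {K : Type*} [Field K] {ma mc r s : ℕ}
    (A : Matrix (Fin ma) (Fin r) K) (B : Matrix (Fin ma) (Fin s) K)
    (C : Matrix (Fin mc) (Fin r) K)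
    (hAC : A.rank < C.rank) (hC : C.rank = r) :
    (Matrix.fromBlocks A B C 0).rank > (Matrix.fromCols A B).rank := by
  classical
  set M := Matrix.fromBlocks A B C 0 with hM
  -- rank-nullity for C : ker C.mulVecLin = ⊥
  have hCrn : C.rank + Module.finrank K (LinearMap.ker C.mulVecLin) = r := by
    have := LinearMap.finrank_range_add_finrank_ker C.mulVecLin
    simpa [Matrix.rank] using this
  have hkerC : LinearMap.ker C.mulVecLin = ⊥ := by
    rw [← Submodule.finrank_eq_zero (R := K)]
    omega
  -- ker A.mulVecLin is nontrivial
  have hArn : A.rank + Module.finrank K (LinearMap.ker A.mulVecLin) = r := by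
    have := LinearMap.finrank_range_add_finrank_ker A.mulVecLin
    simpa [Matrix.rank] using this
  have hkerA : LinearMap.ker A.mulVecLin ≠ ⊥ := by
    intro h
    rw [← Submodule.finrank_eq_zero (R := K)] at h
    omega
  obtain ⟨x, hxker, hx0⟩ := (Submodule.ne_bot_iff _).mp hkerA
  have hAx : A.mulVec x = 0 := hxker
  -- the projection to the top rows
  set π : ((Fin ma ⊕ Fin mc) → K) →ₗ[K] (Fin ma → K) :=
    LinearMap.funLeft K K Sum.inl with hπ
  have hcomp : π.comp M.mulVecLin = (Matrix.fromCols A B).mulVecLin := by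
    apply LinearMap.ext
    intro v
    have hv : v = Sum.elim (v ∘ Sum.inl) (v ∘ Sum.inr) := (Sum.elim_comp_inl_inr v).symm
    rw [LinearMap.comp_apply, Matrix.mulVecLin_apply, Matrix.mulVecLin_apply, hM, hv,
      Matrix.fromBlocks_mulVec, Matrix.fromCols_mulVec_sumElim]
    funext i
    simp [hπ, LinearMap.funLeft_apply]
  set R : Submodule K ((Fin ma ⊕ Fin mc) → K) := LinearMap.range M.mulVecLin with hR
  set π' : R →ₗ[K] (Fin ma → K) := π.comp R.subtype with hπ'
  have hrange : LinearMap.range π' = LinearMap.range (Matrix.fromCols A B).mulVecLin := by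
    rw [hπ', LinearMap.range_comp, Submodule.range_subtype, hR,
      ← LinearMap.range_comp, hcomp]
  -- rank-nullity for π'
  have hrn : Module.finrank K (LinearMap.range π') + Module.finrank K (LinearMap.ker π')
      = M.rank := by
    rw [LinearMap.finrank_range_add_finrank_ker π', Matrix.rank]
  -- the kernel of π' is nontrivial
  have hw : M.mulVecLin (Sum.elim x 0) ∈ R := ⟨Sum.elim x 0, rfl⟩
  have hπw : π (M.mulVecLin (Sum.elim x 0)) = 0 := by
    have := LinearMap.congr_fun hcomp (Sum.elim x 0)
    simp only [LinearMap.coe_comp, Function.comp_apply] at this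
    rw [this, Matrix.mulVecLin_apply, Matrix.fromCols_mulVec_sumElim, hAx]
    simp
  have hwne : M.mulVecLin (Sum.elim x 0) ≠ 0 := by
    intro h
    have hCx : C.mulVec x = 0 := by
      funext j
      have := congrFun h (Sum.inr j)
      simpa [hM, Matrix.mulVecLin_apply, Matrix.fromBlocks_mulVec] using this
    exact hx0 (by simpa [hkerC] using (LinearMap.mem_ker.mpr
      (by simpa [Matrix.mulVecLin_apply] using hCx) : x ∈ LinearMap.ker C.mulVecLin))
  have hker : LinearMap.ker π' ≠ ⊥ := by
    rw [Submodule.ne_bot_iff]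
    refine ⟨⟨M.mulVecLin (Sum.elim x 0), hw⟩, ?_, ?_⟩
    · rw [LinearMap.mem_ker, hπ']
      simpa using hπw
    · intro h
      exact hwne (congrArg Subtype.val h)
  have hkerpos : 0 < Module.finrank K (LinearMap.ker π') := by
    rcases Nat.eq_zero_or_pos (Module.finrank K (LinearMap.ker π')) with h | h
    · exact absurd (Submodule.finrank_eq_zero.mp h) hker
    · exact h
  have : (Matrix.fromCols A B).rank = Module.finrank K (LinearMap.range π') := by
    rw [hrange, Matrix.rank]
  omega
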